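/- For quaternions q, r ∈ ℍ with ‖q‖ = 1, one has −(q · star(r) · q) = r − 2⟪r,q⟫·q; that is, the reflection of r in the hyperplane orthogonal to q is realized by the quaternionic sandwiching −q·star(r)·q. -/
import Mathlib


open Quaternion RealInnerProductSpace

/-- For quaternions `q, r` with `‖q‖ = 1`, the reflection of `r` in the hyperplane orthogonal
to `q` is realized by the quaternionic sandwiching `−q·star(r)·q`. -/
theorem quaternion_sandwich_is_reflection (q r : ℍ[ℝ]) (hq : ‖q‖ = 1) :
    -(q * star r * q) = r - (2 * ⟪r, q⟫) • q := by
  have h : q.re ^ 2 + q.imI ^ 2 + q.imJ ^ 2 + q.imK ^ 2 = 1 := by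
    have := Quaternion.normSq_eq_norm_mul_self q
    rw [hq, mul_one] at this
    rw [Quaternion.normSq_def'] at this
    linarith
  rw [Quaternion.inner_def]
  ext <;>
    simp [Quaternion.re_mul, Quaternion.imI_mul, Quaternion.imJ_mul, Quaternion.imK_mul] <;>
    first
      | linear_combination r.re * h
      | linear_combination r.imI * h
      | linear_combination r.imJ * h
      | linear_combination r.imK * h
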